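/- A continuous linear operator T on H(ℂ) satisfies [T, d/dz] = aI if and only if T = M - a·z·I for some continuous linear operator M on H(ℂ) that commutes with d/dz. -/

import Mathlib

open Complex

lemma Differentiable.entire_deriv {f : ℂ → ℂ} (hf : Differentiable ℂ f) :
    Differentiable ℂ (_root_.deriv f) := by
  rw [← analyticOnNhd_univ_iff_differentiable] at hf ⊢
  exact hf.deriv

/-- The space `H(ℂ)` of entire functions, as a submodule of `C(ℂ, ℂ)` with the
compact-open topology (uniform convergence on compacts). -/
noncomputable def Entire : Submodule ℂ C(ℂ, ℂ) where
  carrier := {f | Differentiable ℂ f}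
  add_mem' := fun hf hg => by simpa using hf.add hg
  zero_mem' := by
    show Differentiable ℂ ⇑(0 : C(ℂ, ℂ))
    rw [ContinuousMap.coe_zero]
    exact differentiable_const 0
  smul_mem' := fun c f hf => by simpa using hf.const_smul c

lemma Entire.diff (f : Entire) : Differentiable ℂ ⇑(f : C(ℂ, ℂ)) := f.2

/-- Differentiation `d/dz` on entire functions. -/
noncomputable def derivE (f : Entire) : Entire :=
  ⟨⟨deriv ⇑(f : C(ℂ, ℂ)), (Entire.diff f).entire_deriv.continuous⟩,
    (Entire.diff f).entire_deriv⟩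

/-- The translation operator `S_λ` on entire functions. -/
noncomputable def translE (lam : ℂ) (f : Entire) : Entire :=
  ⟨⟨fun z => (f : C(ℂ, ℂ)) (z + lam), by fun_prop⟩, (Entire.diff f).comp (by fun_prop)⟩

/-- Multiplication by `z` on entire functions. -/
noncomputable def zmulE (f : Entire) : Entire :=
  ⟨⟨fun z => z * (f : C(ℂ, ℂ)) z, continuous_id.mul (Entire.diff f).continuous⟩,
    differentiable_id.mul (Entire.diff f)⟩



lemma Entire.ext' {f g : Entire} (h : ∀ z, (f : C(ℂ,ℂ)) z = (g : C(ℂ,ℂ)) z) : f = g :=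
  Subtype.ext (ContinuousMap.ext h)

lemma coe_add' (f g : Entire) (z : ℂ) :
    ((f + g : Entire) : C(ℂ,ℂ)) z = (f : C(ℂ,ℂ)) z + (g : C(ℂ,ℂ)) z := rfl

lemma coe_smul' (c : ℂ) (f : Entire) (z : ℂ) :
    ((c • f : Entire) : C(ℂ,ℂ)) z = c * (f : C(ℂ,ℂ)) z := rfl

lemma coe_sub' (f g : Entire) (z : ℂ) :
    ((f - g : Entire) : C(ℂ,ℂ)) z = (f : C(ℂ,ℂ)) z - (g : C(ℂ,ℂ)) z := rfl

lemma derivE_coe (f : Entire) (z : ℂ) :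
    ((derivE f : Entire) : C(ℂ,ℂ)) z = deriv ⇑(f : C(ℂ,ℂ)) z := rfl

lemma zmulE_coe (f : Entire) (z : ℂ) :
    ((zmulE f : Entire) : C(ℂ,ℂ)) z = z * (f : C(ℂ,ℂ)) z := rfl

lemma derivE_add (f g : Entire) : derivE (f + g) = derivE f + derivE g := by
  apply Entire.ext'
  intro z
  simp only [coe_add', coe_smul', coe_sub', zmulE_coe, derivE_coe]
  have h1 : ⇑((f + g : Entire) : C(ℂ,ℂ)) = fun y => (f : C(ℂ,ℂ)) y + (g : C(ℂ,ℂ)) y := rfl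
  rw [h1, deriv_fun_add ((Entire.diff f) z) ((Entire.diff g) z)]

lemma derivE_sub (f g : Entire) : derivE (f - g) = derivE f - derivE g := by
  apply Entire.ext'
  intro z
  simp only [coe_add', coe_smul', coe_sub', zmulE_coe, derivE_coe]
  have h1 : ⇑((f - g : Entire) : C(ℂ,ℂ)) = fun y => (f : C(ℂ,ℂ)) y - (g : C(ℂ,ℂ)) y := rfl
  rw [h1, deriv_fun_sub ((Entire.diff f) z) ((Entire.diff g) z)]

lemma derivE_smul (c : ℂ) (f : Entire) : derivE (c • f) = c • derivE f := by
  apply Entire.ext'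
  intro z
  simp only [coe_add', coe_smul', coe_sub', zmulE_coe, derivE_coe]
  have h1 : ⇑((c • f : Entire) : C(ℂ,ℂ)) = fun y => c * (f : C(ℂ,ℂ)) y := rfl
  rw [h1, deriv_const_mul c ((Entire.diff f) z)]

lemma derivE_zmulE (f : Entire) : derivE (zmulE f) = f + zmulE (derivE f) := by
  apply Entire.ext'
  intro z
  simp only [coe_add', coe_smul', coe_sub', zmulE_coe, derivE_coe]
  have h1 : ⇑((zmulE f : Entire) : C(ℂ,ℂ)) = fun y => y * (f : C(ℂ,ℂ)) y := rfl
  rw [h1, deriv_fun_mul differentiableAt_fun_id ((Entire.diff f) z), deriv_id'']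
  ring

/-- `f ↦ T f + a • (z f)` as a continuous linear operator. -/
noncomputable def Mdef (a : ℂ) (T : Entire →L[ℂ] Entire) : Entire →L[ℂ] Entire where
  toFun f := T f + a • zmulE f
  map_add' f g := by
    show T (f + g) + a • zmulE (f + g) = (T f + a • zmulE f) + (T g + a • zmulE g)
    rw [map_add]
    apply Entire.ext'
    intro z
    simp only [coe_add', coe_smul', coe_sub', zmulE_coe, derivE_coe]
    ring
  map_smul' c f := by
    show T (c • f) + a • zmulE (c • f) = c • (T f + a • zmulE f)
    rw [map_smul]
    apply Entire.ext'
    intro z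
    simp only [coe_add', coe_smul', coe_sub', zmulE_coe, derivE_coe]
    ring
  cont := by
    rw [continuous_induced_rng]
    have key : (fun f : Entire => ((T f + a • zmulE f : Entire) : C(ℂ,ℂ)))
        = fun f : Entire =>
            ((T f : C(ℂ,ℂ)) + a • ((⟨_root_.id, continuous_id⟩ : C(ℂ,ℂ)) * (f : C(ℂ,ℂ)))) := by
      funext f; ext z
      simp only [coe_add', coe_smul', coe_sub', zmulE_coe, derivE_coe]
      rfl
    show Continuous fun f : Entire => ((T f + a • zmulE f : Entire) : C(ℂ,ℂ))
    rw [key]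
    exact (continuous_subtype_val.comp T.continuous).add
      ((continuous_const.mul continuous_subtype_val).const_smul a)

lemma Mdef_apply (a : ℂ) (T : Entire →L[ℂ] Entire) (f : Entire) :
    Mdef a T f = T f + a • zmulE f := rfl

set_option synthInstance.maxHeartbeats 1000000 in
set_option maxHeartbeats 1000000 in
/-- A continuous linear operator `T` on `H(ℂ)` satisfies `[T, d/dz] = a • I` iff
`T = M - a z I` for some continuous linear operator `M` commuting with `d/dz`. -/
theorem stmt_2 (a : ℂ) (T : Entire →L[ℂ] Entire) :
    (∀ f : Entire, T (derivE f) - derivE (T f) = a • f)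
      ↔ ∃ M : Entire →L[ℂ] Entire,
          (∀ f : Entire, M (derivE f) = derivE (M f))
            ∧ ∀ f : Entire, T f = M f - a • zmulE f := by
  constructor
  · intro h
    refine ⟨Mdef a T, fun f => ?_, fun f => ?_⟩
    · have hpt : ∀ z, (T (derivE f) : C(ℂ,ℂ)) z - (derivE (T f) : C(ℂ,ℂ)) z
          = a * (f : C(ℂ,ℂ)) z := by
        intro z
        have := congrArg (fun g : Entire => (g : C(ℂ,ℂ)) z) (h f)
        simpa [coe_sub', coe_smul'] using this
      rw [Mdef_apply, Mdef_apply, derivE_add, derivE_smul, derivE_zmulE]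
      apply Entire.ext'
      intro z
      simp only [coe_add', coe_smul', coe_sub', zmulE_coe, derivE_coe]
      have := hpt z
      simp only [coe_add', coe_smul', coe_sub', zmulE_coe, derivE_coe] at this ⊢
      linear_combination this
    · rw [Mdef_apply]
      apply Entire.ext'
      intro z
      simp only [coe_add', coe_smul', coe_sub', zmulE_coe, derivE_coe]
      ring
  · rintro ⟨M, hM, hTM⟩ f
    rw [hTM (derivE f), hM f, hTM f, derivE_sub, derivE_smul, derivE_zmulE]
    apply Entire.ext'
    intro z
    simp only [coe_add', coe_smul', coe_sub', zmulE_coe, derivE_coe]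
    ring
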